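/- (Chain decomposition) For an n-partite density operator ρ and any fixed product projective measurement Φ_{A₁⋯Aₙ}, the fixed-measurement global discord D_Φ(A₁:⋯:Aₙ) = S(Φ_{A₁⋯Aₙ}(ρ)) − S(ρ) decomposes as D_Φ(A₁:⋯:Aₙ) = Σ_{i=1}^{n} D_Φ(Φ_{A₁⋯A_{i−1}}(ρ) | A_i), where D_Φ(σ|A_i) = I(σ) − I(Φ_{A_i}(σ)) + H({p_{a_i}}) − S(σ_{A_i}), I is the multipartite mutual information, and Φ_{A₁⋯A₀} is the identity map. -/

import Mathlib

open Matrix BigOperators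

/-- Von Neumann entropy in base 2, via eigenvalues of a Hermitian matrix. -/
noncomputable def Sent {d : Type*} [Fintype d] [DecidableEq d] (ρ : Matrix d d ℂ) : ℝ :=
  if h : ρ.IsHermitian then ∑ i, Real.negMulLog (h.eigenvalues i) / Real.log 2 else 0

/-- Rank-one projector |v⟩⟨v| (for a unit vector v). -/
def proj {d : Type*} (v : d → ℂ) : Matrix d d ℂ := Matrix.vecMulVec v (star v)

/-- `e` is an orthonormal basis (a complete family of rank-one orthogonal projectors). -/
def ONB {d : Type*} [Fintype d] [DecidableEq d] (e : d → d → ℂ) : Prop :=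
  ∀ k l, star (e k) ⬝ᵥ e l = if k = l then 1 else 0

section Multi
variable {n : ℕ} {m : Fin n → Type*} [∀ i, Fintype (m i)] [∀ i, DecidableEq (m i)]

/-- The operator `I ⊗ ⋯ ⊗ A ⊗ ⋯ ⊗ I` acting as `A` on subsystem `i`. -/
def embedAt (i : Fin n) (A : Matrix (m i) (m i) ℂ) :
    Matrix (∀ j, m j) (∀ j, m j) ℂ :=
  Matrix.of fun x y =>
    A (x i) (y i) * ∏ j ∈ Finset.univ.erase i, (if x j = y j then (1 : ℂ) else 0)

/-- Tensor product of local operators. -/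
def prodMat (M : ∀ i, Matrix (m i) (m i) ℂ) : Matrix (∀ i, m i) (∀ i, m i) ℂ :=
  Matrix.of fun x y => ∏ i, M i (x i) (y i)

/-- Marginal (reduced density operator) on subsystem `i`. -/
noncomputable def marginal (ρ : Matrix (∀ j, m j) (∀ j, m j) ℂ) (i : Fin n) :
    Matrix (m i) (m i) ℂ :=
  Matrix.of fun a b => ∑ f : ∀ j, m j, if f i = a then ρ f (Function.update f i b) else 0

/-- Non-selective rank-one projective measurement on subsystem `i` in the basis `e`. -/
noncomputable def pinchAt (i : Fin n) (e : m i → m i → ℂ)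
    (ρ : Matrix (∀ j, m j) (∀ j, m j) ℂ) : Matrix (∀ j, m j) (∀ j, m j) ℂ :=
  ∑ k : m i, embedAt i (proj (e k)) * ρ * embedAt i (proj (e k))

/-- Non-selective local measurements on subsystems `A₁,…,A_k` (in the bases `e`). -/
noncomputable def pinchUpTo (e : ∀ i, m i → m i → ℂ) :
    ℕ → Matrix (∀ j, m j) (∀ j, m j) ℂ → Matrix (∀ j, m j) (∀ j, m j) ℂ
  | 0 => id
  | (k + 1) => fun ρ =>
      if h : k < n then pinchAt ⟨k, h⟩ (e ⟨k, h⟩) (pinchUpTo e k ρ)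
      else pinchUpTo e k ρ

/-- Multipartite mutual information `I(σ) = Σ_k S(σ_{A_k}) − S(σ)`. -/
noncomputable def Imut (σ : Matrix (∀ j, m j) (∀ j, m j) ℂ) : ℝ :=
  (∑ i, Sent (marginal σ i)) - Sent σ

/-- Shannon entropy (base 2) of the outcome distribution of the measurement of
subsystem `i` in basis `e`, in state `σ`. -/
noncomputable def Hmeas (i : Fin n) (e : m i → m i → ℂ)
    (σ : Matrix (∀ j, m j) (∀ j, m j) ℂ) : ℝ :=
  ∑ k : m i, Real.negMulLog ((embedAt i (proj (e k)) * σ).trace.re) / Real.log 2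

/-- Fixed-measurement asymmetric thermal discord
`D_Φ(σ|A_i) = I(σ) − I(Φ_{A_i}(σ)) + H({p_{a_i}}) − S(σ_{A_i})`. -/
noncomputable def DPhiAt (i : Fin n) (e : m i → m i → ℂ)
    (σ : Matrix (∀ j, m j) (∀ j, m j) ℂ) : ℝ :=
  Imut σ - Imut (pinchAt i e σ) + Hmeas i e σ - Sent (marginal σ i)

/-- Asymmetric thermal discord `D_th(σ|A_i)`, minimized over measurements on `A_i`. -/
noncomputable def DthAt (i : Fin n) (σ : Matrix (∀ j, m j) (∀ j, m j) ℂ) : ℝ :=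
  sInf {x : ℝ | ∃ e : m i → m i → ℂ, ONB e ∧ x = DPhiAt i e σ}

/-- Thermal global quantum discord. -/
noncomputable def GQD (ρ : Matrix (∀ j, m j) (∀ j, m j) ℂ) : ℝ :=
  sInf {x : ℝ | ∃ e : ∀ i, m i → m i → ℂ,
    (∀ i, ONB (e i)) ∧ x = Sent (pinchUpTo e n ρ) - Sent ρ}

end Multi

set_option linter.unusedSectionVars false
set_option maxHeartbeats 1000000

open Function in
lemma proj_apply' {d : Type*} (v : d → ℂ) (a b : d) :
    proj v a b = v a * (starRingEnd ℂ) (v b) := rfl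

lemma ONB.mul_conjTranspose {d : Type*} [Fintype d] [DecidableEq d] {e : d → d → ℂ}
    (he : ONB e) : Matrix.of e * (Matrix.of e)ᴴ = 1 := by
  ext k l
  have h := congrArg (starRingEnd ℂ) (he k l)
  simp only [dotProduct, Pi.star_apply, RCLike.star_def, map_sum, _root_.map_mul,
    Complex.conj_conj, apply_ite (starRingEnd ℂ), _root_.map_one, _root_.map_zero] at h
  simp only [Matrix.mul_apply, Matrix.conjTranspose_apply, Matrix.of_apply,
    Matrix.one_apply, RCLike.star_def]
  exact h

lemma ONB.sum_conj_mul {d : Type*} [Fintype d] [DecidableEq d] {e : d → d → ℂ}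
    (he : ONB e) (s t : d) :
    ∑ k, (starRingEnd ℂ) (e k s) * e k t = if s = t then 1 else 0 := by
  have h2 : (Matrix.of e)ᴴ * Matrix.of e = 1 := mul_eq_one_comm.mp he.mul_conjTranspose
  have h3 := congrFun (congrFun h2 s) t
  simpa only [Matrix.mul_apply, Matrix.conjTranspose_apply, Matrix.of_apply,
    Matrix.one_apply, RCLike.star_def] using h3

lemma ONB.sum_mul_conj {d : Type*} [Fintype d] [DecidableEq d] {e : d → d → ℂ}
    (he : ONB e) (k : d) :
    ∑ c, e k c * (starRingEnd ℂ) (e k c) = 1 := by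
  have h3 := congrFun (congrFun he.mul_conjTranspose k) k
  simpa only [Matrix.mul_apply, Matrix.conjTranspose_apply, Matrix.of_apply,
    Matrix.one_apply, RCLike.star_def, if_pos rfl, ↓reduceIte] using h3

section AuxMulti
variable {n : ℕ} {m : Fin n → Type*} [∀ i, Fintype (m i)] [∀ i, DecidableEq (m i)]

/-- inverse of splitting a dependent product at `i`. -/
noncomputable def PS (i : Fin n) : m i × (∀ j : {j // j ≠ i}, m j) → (∀ j, m j) :=
  (Equiv.piSplitAt i m).symm

lemma PS_apply_same (i : Fin n) (c : m i) (g : ∀ j : {j // j ≠ i}, m j) :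
    PS i (c, g) i = c := by
  simp [PS, Equiv.piSplitAt]

lemma PS_apply_ne (i : Fin n) (c : m i) (g : ∀ j : {j // j ≠ i}, m j) (j : Fin n) (hj : j ≠ i) :
    PS i (c, g) j = g ⟨j, hj⟩ := by
  simp [PS, Equiv.piSplitAt, hj]

lemma PS_update (i : Fin n) (c c' : m i) (g : ∀ j : {j // j ≠ i}, m j) :
    Function.update (PS (m := m) i (c, g)) i c' = PS i (c', g) := by
  funext j
  by_cases hj : j = i
  · subst hj; simp [PS_apply_same]
  · simp [Function.update_of_ne hj, PS_apply_ne _ _ _ _ hj]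

lemma PS_update_ne (i j : Fin n) (hj : j ≠ i) (c : m i) (b : m j)
    (g : ∀ j : {j // j ≠ i}, m j) :
    Function.update (PS (m := m) i (c, g)) j b = PS i (c, Function.update g ⟨j, hj⟩ b) := by
  funext l
  by_cases hl : l = i
  · subst hl
    rw [Function.update_of_ne (Ne.symm hj), PS_apply_same, PS_apply_same]
  · by_cases hlj : l = j
    · subst hlj
      rw [Function.update_self, PS_apply_ne _ _ _ _ hl, Function.update_self]
    · rw [Function.update_of_ne hlj, PS_apply_ne _ _ _ _ hl, PS_apply_ne _ _ _ _ hl,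
        Function.update_of_ne]
      simp [Subtype.ext_iff, hlj]

lemma PS_restr (i : Fin n) (x : ∀ j, m j) (s : m i) :
    PS i (s, fun j : {j // j ≠ i} => x j) = Function.update x i s := by
  funext j
  by_cases hj : j = i
  · subst hj; simp [PS_apply_same]
  · simp [Function.update_of_ne hj, PS_apply_ne _ _ _ _ hj]

lemma sum_pi (i : Fin n) (H : (∀ j, m j) → ℂ) :
    ∑ f : ∀ j, m j, H f = ∑ c : m i, ∑ g : ∀ j : {j // j ≠ i}, m j, H (PS i (c, g)) := by
  rw [← Equiv.sum_comp (Equiv.piSplitAt i m).symm H, Fintype.sum_prod_type]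
  rfl

lemma marginal_apply' (σ : Matrix (∀ j, m j) (∀ j, m j) ℂ) (i : Fin n) (a b : m i) :
    marginal σ i a b = ∑ g : ∀ j : {j // j ≠ i}, m j, σ (PS i (a, g)) (PS i (b, g)) := by
  show (∑ f : ∀ j, m j, if f i = a then σ f (Function.update f i b) else 0) = _
  rw [sum_pi i]
  rw [Finset.sum_comm]
  refine Finset.sum_congr rfl fun g _ => ?_
  simp only [PS_apply_same, PS_update]
  simp

lemma embedAt_apply_PS (i : Fin n) (A : Matrix (m i) (m i) ℂ) (x : ∀ j, m j)
    (s : m i) (g : ∀ j : {j // j ≠ i}, m j) :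
    embedAt i A x (PS i (s, g)) =
      A (x i) s * (if (fun j : {j // j ≠ i} => x j) = g then 1 else 0) := by
  show A (x i) (PS i (s,g) i) * ∏ j ∈ Finset.univ.erase i, _ = _
  rw [PS_apply_same, Finset.prod_boole]
  by_cases h : (fun j : {j // j ≠ i} => x j) = g
  · rw [if_pos h, if_pos]
    intro j hj
    have hj' : j ≠ i := (Finset.mem_erase.mp hj).1
    rw [PS_apply_ne _ _ _ _ hj', ← h]
  · rw [if_neg h, if_neg]
    intro hall
    refine h (funext fun j => ?_)
    have := hall j (Finset.mem_erase.mpr ⟨j.2, Finset.mem_univ _⟩)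
    rw [PS_apply_ne _ _ _ _ j.2] at this
    exact this

lemma embedAt_apply_PS' (i : Fin n) (A : Matrix (m i) (m i) ℂ) (y : ∀ j, m j)
    (t : m i) (g : ∀ j : {j // j ≠ i}, m j) :
    embedAt i A (PS i (t, g)) y =
      A t (y i) * (if g = (fun j : {j // j ≠ i} => y j) then 1 else 0) := by
  show A (PS i (t,g) i) (y i) * ∏ j ∈ Finset.univ.erase i, _ = _
  rw [PS_apply_same, Finset.prod_boole]
  by_cases h : g = (fun j : {j // j ≠ i} => y j)
  · rw [if_pos h, if_pos]
    intro j hj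
    have hj' : j ≠ i := (Finset.mem_erase.mp hj).1
    rw [PS_apply_ne _ _ _ _ hj', h]
  · rw [if_neg h, if_neg]
    intro hall
    refine h (funext fun j => ?_)
    have := hall j (Finset.mem_erase.mpr ⟨j.2, Finset.mem_univ _⟩)
    rw [PS_apply_ne _ _ _ _ j.2] at this
    exact this

end AuxMulti
section AuxMulti2
variable {n : ℕ} {m : Fin n → Type*} [∀ i, Fintype (m i)] [∀ i, DecidableEq (m i)]

lemma embedAt_mul_apply (i : Fin n) (A : Matrix (m i) (m i) ℂ)
    (σ : Matrix (∀ j, m j) (∀ j, m j) ℂ) (x y : ∀ j, m j) :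
    (embedAt i A * σ) x y = ∑ s, A (x i) s * σ (Function.update x i s) y := by
  rw [Matrix.mul_apply, sum_pi i (fun u => embedAt i A x u * σ u y)]
  refine Finset.sum_congr rfl fun s _ => ?_
  rw [show ∑ g : ∀ j : {j // j ≠ i}, m j, embedAt i A x (PS i (s, g)) * σ (PS i (s, g)) y
      = ∑ g : ∀ j : {j // j ≠ i}, m j, if (fun j : {j // j ≠ i} => x j) = g then
          A (x i) s * σ (PS i (s, g)) y else 0 from
    Finset.sum_congr rfl fun g _ => by rw [embedAt_apply_PS]; split <;> simp]
  rw [Finset.sum_ite_eq]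
  simp [PS_restr]

lemma mul_embedAt_apply (i : Fin n) (A : Matrix (m i) (m i) ℂ)
    (σ : Matrix (∀ j, m j) (∀ j, m j) ℂ) (x y : ∀ j, m j) :
    (σ * embedAt i A) x y = ∑ t, σ x (Function.update y i t) * A t (y i) := by
  rw [Matrix.mul_apply, sum_pi i (fun u => σ x u * embedAt i A u y)]
  refine Finset.sum_congr rfl fun t _ => ?_
  rw [show ∑ g : ∀ j : {j // j ≠ i}, m j, σ x (PS i (t, g)) * embedAt i A (PS i (t, g)) y
      = ∑ g : ∀ j : {j // j ≠ i}, m j, if g = (fun j : {j // j ≠ i} => y j) then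
          σ x (PS i (t, g)) * A t (y i) else 0 from
    Finset.sum_congr rfl fun g _ => by rw [embedAt_apply_PS']; split <;> simp]
  rw [Finset.sum_ite_eq']
  simp [PS_restr]

lemma pinchAt_apply_entries (i : Fin n) (e : m i → m i → ℂ)
    (σ : Matrix (∀ j, m j) (∀ j, m j) ℂ) (x y : ∀ j, m j) :
    pinchAt i e σ x y = ∑ k, ∑ t, ∑ s,
      (e k (x i) * (starRingEnd ℂ) (e k s)) * σ (Function.update x i s) (Function.update y i t)
        * (e k t * (starRingEnd ℂ) (e k (y i))) := by
  rw [pinchAt, Matrix.sum_apply]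
  refine Finset.sum_congr rfl fun k _ => ?_
  rw [mul_embedAt_apply]
  refine Finset.sum_congr rfl fun t _ => ?_
  rw [embedAt_mul_apply, Finset.sum_mul]
  refine Finset.sum_congr rfl fun s _ => ?_
  rw [proj_apply', proj_apply']

end AuxMulti2
section AuxMulti3
variable {n : ℕ} {m : Fin n → Type*} [∀ i, Fintype (m i)] [∀ i, DecidableEq (m i)]

lemma sum_pinch_diag (i : Fin n) {e : m i → m i → ℂ} (he : ONB e)
    (σ : Matrix (∀ j, m j) (∀ j, m j) ℂ) (g g' : ∀ j : {j // j ≠ i}, m j) :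
    ∑ c, pinchAt i e σ (PS i (c, g)) (PS i (c, g'))
      = ∑ c, σ (PS i (c, g)) (PS i (c, g')) := by
  calc ∑ c, pinchAt i e σ (PS i (c, g)) (PS i (c, g'))
      = ∑ c, ∑ k, (e k c * (starRingEnd ℂ) (e k c)) *
          ∑ t, ∑ s, ((starRingEnd ℂ) (e k s) * e k t) * σ (PS i (s, g)) (PS i (t, g')) := by
        refine Finset.sum_congr rfl fun c _ => ?_
        rw [pinchAt_apply_entries]
        simp only [PS_apply_same, PS_update]
        refine Finset.sum_congr rfl fun k _ => ?_
        rw [Finset.mul_sum]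
        refine Finset.sum_congr rfl fun t _ => ?_
        rw [Finset.mul_sum]
        refine Finset.sum_congr rfl fun s _ => ?_
        ring
    _ = ∑ k, (∑ c, e k c * (starRingEnd ℂ) (e k c)) *
          ∑ t, ∑ s, ((starRingEnd ℂ) (e k s) * e k t) * σ (PS i (s, g)) (PS i (t, g')) := by
        rw [Finset.sum_comm]
        exact Finset.sum_congr rfl fun k _ => (Finset.sum_mul _ _ _).symm
    _ = ∑ k, ∑ t, ∑ s, ((starRingEnd ℂ) (e k s) * e k t) * σ (PS i (s, g)) (PS i (t, g')) := by
        refine Finset.sum_congr rfl fun k _ => ?_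
        rw [he.sum_mul_conj, one_mul]
    _ = ∑ t, ∑ s, (∑ k, (starRingEnd ℂ) (e k s) * e k t) * σ (PS i (s, g)) (PS i (t, g')) := by
        rw [Finset.sum_comm]
        refine Finset.sum_congr rfl fun t _ => ?_
        rw [Finset.sum_comm]
        exact Finset.sum_congr rfl fun s _ => (Finset.sum_mul _ _ _).symm
    _ = ∑ c, σ (PS i (c, g)) (PS i (c, g')) := by
        refine Finset.sum_congr rfl fun t _ => ?_
        rw [show ∑ s, (∑ k, (starRingEnd ℂ) (e k s) * e k t) * σ (PS i (s, g)) (PS i (t, g'))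
            = ∑ s, if s = t then σ (PS i (s, g)) (PS i (t, g')) else 0 from
          Finset.sum_congr rfl fun s _ => by rw [he.sum_conj_mul]; split <;> simp]
        rw [Finset.sum_ite_eq' Finset.univ t]
        simp

lemma marginal_pinchAt_ne (i j : Fin n) (hj : j ≠ i) {e : m i → m i → ℂ} (he : ONB e)
    (σ : Matrix (∀ j, m j) (∀ j, m j) ℂ) :
    marginal (pinchAt i e σ) j = marginal σ j := by
  ext a b
  show (∑ f : ∀ j, m j, if f j = a then pinchAt i e σ f (Function.update f j b) else 0)
      = (∑ f : ∀ j, m j, if f j = a then σ f (Function.update f j b) else 0)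
  rw [sum_pi i, sum_pi i, Finset.sum_comm, Finset.sum_comm
    (s := (Finset.univ : Finset (m i)))]
  refine Finset.sum_congr rfl fun g _ => ?_
  simp only [PS_apply_ne _ _ _ _ hj, PS_update_ne i j hj]
  by_cases h : g ⟨j, hj⟩ = a
  · simp only [if_pos h]
    exact sum_pinch_diag i he σ g _
  · simp only [if_neg h, Finset.sum_const_zero]

end AuxMulti3
section AuxMulti4
variable {n : ℕ} {m : Fin n → Type*} [∀ i, Fintype (m i)] [∀ i, DecidableEq (m i)]

/-- Outcome probability (as a complex number) of result `k` when measuring subsystem `i`. -/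
noncomputable def Qval (i : Fin n) (e : m i → m i → ℂ)
    (σ : Matrix (∀ j, m j) (∀ j, m j) ℂ) (k : m i) : ℂ :=
  ∑ s, ∑ t, (starRingEnd ℂ) (e k s) * marginal σ i s t * e k t

lemma trace_embed_proj (i : Fin n) (e : m i → m i → ℂ)
    (σ : Matrix (∀ j, m j) (∀ j, m j) ℂ) (k : m i) :
    (embedAt i (proj (e k)) * σ).trace = Qval i e σ k := by
  calc (embedAt i (proj (e k)) * σ).trace
      = ∑ x : ∀ j, m j, (embedAt i (proj (e k)) * σ) x x := rfl
    _ = ∑ x : ∀ j, m j, ∑ s, (e k (x i) * (starRingEnd ℂ) (e k s)) *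
          σ (Function.update x i s) x := by
        refine Finset.sum_congr rfl fun x _ => ?_
        rw [embedAt_mul_apply]
        exact Finset.sum_congr rfl fun s _ => by rw [proj_apply']
    _ = ∑ c : m i, ∑ g : ∀ j : {j // j ≠ i}, m j, ∑ s,
          (e k c * (starRingEnd ℂ) (e k s)) * σ (PS i (s, g)) (PS i (c, g)) := by
        rw [sum_pi i]
        refine Finset.sum_congr rfl fun c _ => Finset.sum_congr rfl fun g _ =>
          Finset.sum_congr rfl fun s _ => ?_
        rw [PS_apply_same, PS_update]
    _ = ∑ s, ∑ c : m i, ∑ g : ∀ j : {j // j ≠ i}, m j,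
          (e k c * (starRingEnd ℂ) (e k s)) * σ (PS i (s, g)) (PS i (c, g)) := by
        rw [show (∑ c : m i, ∑ g : ∀ j : {j // j ≠ i}, m j, ∑ s,
            (e k c * (starRingEnd ℂ) (e k s)) * σ (PS i (s, g)) (PS i (c, g)))
            = ∑ c : m i, ∑ s, ∑ g : ∀ j : {j // j ≠ i}, m j,
            (e k c * (starRingEnd ℂ) (e k s)) * σ (PS i (s, g)) (PS i (c, g)) from
          Finset.sum_congr rfl fun c _ => Finset.sum_comm]
        rw [Finset.sum_comm]
    _ = Qval i e σ k := by
        refine Finset.sum_congr rfl fun s _ => ?_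
        refine Finset.sum_congr rfl fun t _ => ?_
        rw [marginal_apply', Finset.mul_sum, Finset.sum_mul]
        exact Finset.sum_congr rfl fun g _ => by ring

lemma marginal_pinchAt_self_apply (i : Fin n) (e : m i → m i → ℂ)
    (σ : Matrix (∀ j, m j) (∀ j, m j) ℂ) (a b : m i) :
    marginal (pinchAt i e σ) i a b
      = ∑ k, e k a * Qval i e σ k * (starRingEnd ℂ) (e k b) := by
  calc marginal (pinchAt i e σ) i a b
      = ∑ g : ∀ j : {j // j ≠ i}, m j, ∑ k, ∑ t, ∑ s,
          (e k a * (starRingEnd ℂ) (e k s)) * σ (PS i (s, g)) (PS i (t, g))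
            * (e k t * (starRingEnd ℂ) (e k b)) := by
        rw [marginal_apply']
        refine Finset.sum_congr rfl fun g _ => ?_
        rw [pinchAt_apply_entries]
        simp only [PS_apply_same, PS_update]
    _ = ∑ k, ∑ g : ∀ j : {j // j ≠ i}, m j, ∑ t, ∑ s,
          (e k a * (starRingEnd ℂ) (e k s)) * σ (PS i (s, g)) (PS i (t, g))
            * (e k t * (starRingEnd ℂ) (e k b)) := Finset.sum_comm
    _ = ∑ k, e k a * Qval i e σ k * (starRingEnd ℂ) (e k b) := by
        refine Finset.sum_congr rfl fun k _ => ?_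
        rw [Qval]
        calc ∑ g : ∀ j : {j // j ≠ i}, m j, ∑ t, ∑ s,
              (e k a * (starRingEnd ℂ) (e k s)) * σ (PS i (s, g)) (PS i (t, g))
                * (e k t * (starRingEnd ℂ) (e k b))
            = ∑ t, ∑ g : ∀ j : {j // j ≠ i}, m j, ∑ s,
              (e k a * (starRingEnd ℂ) (e k s)) * σ (PS i (s, g)) (PS i (t, g))
                * (e k t * (starRingEnd ℂ) (e k b)) := Finset.sum_comm
          _ = ∑ t, ∑ s, ∑ g : ∀ j : {j // j ≠ i}, m j,
              (e k a * (starRingEnd ℂ) (e k s)) * σ (PS i (s, g)) (PS i (t, g))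
                * (e k t * (starRingEnd ℂ) (e k b)) :=
              Finset.sum_congr rfl fun t _ => Finset.sum_comm
          _ = ∑ s, ∑ t, ∑ g : ∀ j : {j // j ≠ i}, m j,
              (e k a * (starRingEnd ℂ) (e k s)) * σ (PS i (s, g)) (PS i (t, g))
                * (e k t * (starRingEnd ℂ) (e k b)) := Finset.sum_comm
          _ = e k a * (∑ s, ∑ t, (starRingEnd ℂ) (e k s) * marginal σ i s t * e k t)
                * (starRingEnd ℂ) (e k b) := by
              rw [Finset.mul_sum, Finset.sum_mul]
              refine Finset.sum_congr rfl fun s _ => ?_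
              rw [Finset.mul_sum, Finset.sum_mul]
              refine Finset.sum_congr rfl fun t _ => ?_
              rw [marginal_apply', Finset.mul_sum, Finset.sum_mul, Finset.mul_sum,
                Finset.sum_mul]
              exact Finset.sum_congr rfl fun g _ => by ring

end AuxMulti4
lemma proj_conjTranspose {d : Type*} [Fintype d] [DecidableEq d] (v : d → ℂ) :
    (proj v)ᴴ = proj v := by
  ext a b
  simp only [Matrix.conjTranspose_apply, proj_apply', RCLike.star_def, _root_.map_mul,
    Complex.conj_conj]
  ring

section AuxMulti5
variable {n : ℕ} {m : Fin n → Type*} [∀ i, Fintype (m i)] [∀ i, DecidableEq (m i)]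

lemma embedAt_conjTranspose (i : Fin n) (A : Matrix (m i) (m i) ℂ) :
    (embedAt i A)ᴴ = embedAt i Aᴴ := by
  ext x y
  show (starRingEnd ℂ) (A (y i) (x i) * ∏ j ∈ Finset.univ.erase i,
      (if y j = x j then (1 : ℂ) else 0)) = Aᴴ (x i) (y i) * _
  rw [_root_.map_mul, map_prod]
  congr 1
  refine Finset.prod_congr rfl fun j _ => ?_
  by_cases h : x j = y j
  · simp [h]
  · simp only [if_neg h, if_neg (show ¬y j = x j from fun hh => h hh.symm), map_zero]

lemma pinchAt_isHermitian (i : Fin n) (e : m i → m i → ℂ)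
    {σ : Matrix (∀ j, m j) (∀ j, m j) ℂ} (hσ : σ.IsHermitian) :
    (pinchAt i e σ).IsHermitian := by
  show (pinchAt i e σ)ᴴ = _
  rw [pinchAt, Matrix.conjTranspose_sum]
  refine Finset.sum_congr rfl fun k _ => ?_
  rw [Matrix.conjTranspose_mul, Matrix.conjTranspose_mul, embedAt_conjTranspose,
    proj_conjTranspose, hσ.eq, mul_assoc]

lemma marginal_isHermitian {σ : Matrix (∀ j, m j) (∀ j, m j) ℂ} (hσ : σ.IsHermitian)
    (i : Fin n) : (marginal σ i).IsHermitian := by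
  ext a b
  rw [Matrix.conjTranspose_apply, marginal_apply', marginal_apply', RCLike.star_def, map_sum]
  refine Finset.sum_congr rfl fun g _ => ?_
  exact congrFun (congrFun hσ.eq _) _

lemma Qval_real (i : Fin n) (e : m i → m i → ℂ)
    {σ : Matrix (∀ j, m j) (∀ j, m j) ℂ} (hσ : σ.IsHermitian) (k : m i) :
    Qval i e σ k = (((Qval i e σ k).re : ℝ) : ℂ) := by
  have hM := marginal_isHermitian hσ i
  have hconj : (starRingEnd ℂ) (Qval i e σ k) = Qval i e σ k := by
    conv_lhs => rw [Qval]
    rw [map_sum]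
    rw [show (∑ s, (starRingEnd ℂ) (∑ t, (starRingEnd ℂ) (e k s) * marginal σ i s t * e k t))
        = ∑ s, ∑ t, (starRingEnd ℂ) (e k t) * marginal σ i t s * e k s from
      Finset.sum_congr rfl fun s _ => by
        rw [map_sum]
        refine Finset.sum_congr rfl fun t _ => ?_
        rw [_root_.map_mul, _root_.map_mul, Complex.conj_conj]
        rw [show (starRingEnd ℂ) (marginal σ i s t) = marginal σ i t s from
          congrFun (congrFun hM.eq t) s]
        ring]
    conv_rhs => rw [Qval]
    rw [Finset.sum_comm]
  exact ((Complex.conj_eq_iff_re).mp hconj).symm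

end AuxMulti5
open Polynomial in
lemma charpoly_unitary_conj {d : Type*} [Fintype d] [DecidableEq d]
    (U M : Matrix d d ℂ) (h : U * Uᴴ = 1) :
    (U * M * Uᴴ).charpoly = M.charpoly := by
  have hmapC : ∀ A B : Matrix d d ℂ, (A * B).map (C : ℂ → ℂ[X]) = A.map C * B.map C := by
    intro A B
    exact Matrix.map_mul (f := (C : ℂ →+* ℂ[X]))
  have hcm : Matrix.charmatrix (U * M * Uᴴ)
      = U.map C * Matrix.charmatrix M * Uᴴ.map C := by
    rw [Matrix.charmatrix, Matrix.charmatrix]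
    have hscalar : (Matrix.scalar d (X : ℂ[X])) = (X : ℂ[X]) • (1 : Matrix d d ℂ[X]) := by
      rw [Matrix.scalar_apply, Matrix.smul_one_eq_diagonal]
    rw [hscalar]
    rw [Matrix.mul_sub, Matrix.sub_mul]
    congr 1
    · rw [mul_smul_comm, mul_one, smul_mul_assoc, ← hmapC, h]
      simp
    · rw [RingHom.mapMatrix_apply, RingHom.mapMatrix_apply, ← hmapC, ← hmapC, mul_assoc]
  rw [Matrix.charpoly, Matrix.charpoly, hcm, Matrix.det_mul, Matrix.det_mul,
    mul_comm, ← mul_assoc, ← Matrix.det_mul, ← hmapC, mul_eq_one_comm.mp h]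
  simp

open Polynomial in
lemma charpoly_diagonal' {d : Type*} [Fintype d] [DecidableEq d] (v : d → ℂ) :
    (Matrix.diagonal v).charpoly = ∏ k, (X - C (v k)) := by
  have : Matrix.charmatrix (Matrix.diagonal v)
      = Matrix.diagonal (fun k => (X : ℂ[X]) - C (v k)) := by
    ext a b
    by_cases hab : a = b
    · subst hab
      rw [Matrix.charmatrix_apply_eq, Matrix.diagonal_apply_eq, Matrix.diagonal_apply_eq]
    · rw [Matrix.charmatrix_apply_ne _ _ _ hab, Matrix.diagonal_apply_ne _ hab,
        Matrix.diagonal_apply_ne _ hab]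
      simp
  rw [Matrix.charpoly, this, Matrix.det_diagonal]

open Polynomial in
lemma sent_unitary_diag {d : Type*} [Fintype d] [DecidableEq d]
    (r : d → ℝ) (W : Matrix d d ℂ) (hW : W * Wᴴ = 1) :
    Sent (W * Matrix.diagonal (fun k => ((r k : ℝ) : ℂ)) * Wᴴ)
      = ∑ k, Real.negMulLog (r k) / Real.log 2 := by
  set M := W * Matrix.diagonal (fun k => ((r k : ℝ) : ℂ)) * Wᴴ with hMdef
  have hM : M.IsHermitian := by
    show Mᴴ = M
    rw [hMdef, Matrix.conjTranspose_mul, Matrix.conjTranspose_mul,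
      Matrix.conjTranspose_conjTranspose, Matrix.diagonal_conjTranspose]
    rw [show (star fun k => ((r k : ℝ) : ℂ)) = fun k => ((r k : ℝ) : ℂ) from
      funext fun k => by simp [RCLike.star_def]]
    rw [mul_assoc]
  have hcp1 : M.charpoly = ∏ k, (X - C ((r k : ℝ) : ℂ)) := by
    rw [hMdef, charpoly_unitary_conj _ _ hW, charpoly_diagonal']
  have hV : (Matrix.IsHermitian.eigenvectorUnitary hM : Matrix d d ℂ)
      * (Matrix.IsHermitian.eigenvectorUnitary hM : Matrix d d ℂ)ᴴ = 1 := by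
    rw [← Matrix.star_eq_conjTranspose]
    exact (Matrix.mem_unitaryGroup_iff).mp (Matrix.IsHermitian.eigenvectorUnitary hM).2
  have hcp2 : M.charpoly = ∏ j, (X - C ((hM.eigenvalues j : ℝ) : ℂ)) := by
    conv_lhs => rw [hM.spectral_theorem]
    rw [Unitary.conjStarAlgAut_apply, Matrix.star_eq_conjTranspose, charpoly_unitary_conj _ _ hV, charpoly_diagonal']
    rfl
  have hms : (Finset.univ.val.map fun j => ((hM.eigenvalues j : ℝ) : ℂ))
      = Finset.univ.val.map fun k => ((r k : ℝ) : ℂ) := by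
    have h1 : (∏ j, (X - C ((hM.eigenvalues j : ℝ) : ℂ)))
        = ((Finset.univ.val.map fun j => ((hM.eigenvalues j : ℝ) : ℂ)).map
            fun a => X - C a).prod := by
      rw [Multiset.map_map]; rfl
    have h2 : (∏ k, (X - C ((r k : ℝ) : ℂ)))
        = ((Finset.univ.val.map fun k => ((r k : ℝ) : ℂ)).map fun a => X - C a).prod := by
      rw [Multiset.map_map]; rfl
    have h3 := hcp2.symm.trans hcp1
    rw [h1, h2] at h3
    have h4 := congrArg Polynomial.roots h3
    rwa [Polynomial.roots_multiset_prod_X_sub_C, Polynomial.roots_multiset_prod_X_sub_C] at h4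
  have hsum : ∑ j, Real.negMulLog (hM.eigenvalues j) = ∑ k, Real.negMulLog (r k) := by
    have h5 := congrArg (fun s : Multiset ℂ => (s.map fun z => Real.negMulLog z.re).sum) hms
    simp only [Multiset.map_map, Function.comp] at h5
    simpa only [Complex.ofReal_re, Finset.sum_eq_multiset_sum] using h5
  rw [Sent, dif_pos hM, ← Finset.sum_div, ← Finset.sum_div, hsum]
section AuxMulti7
variable {n : ℕ} {m : Fin n → Type*} [∀ i, Fintype (m i)] [∀ i, DecidableEq (m i)]

lemma marginal_pinchAt_self_eq (i : Fin n) {e : m i → m i → ℂ} (he : ONB e)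
    {σ : Matrix (∀ j, m j) (∀ j, m j) ℂ} (hσ : σ.IsHermitian) :
    marginal (pinchAt i e σ) i
      = (Matrix.of e)ᵀ * Matrix.diagonal (fun k => (((Qval i e σ k).re : ℝ) : ℂ))
          * ((Matrix.of e)ᵀ)ᴴ := by
  ext a b
  rw [marginal_pinchAt_self_apply]
  rw [Matrix.mul_apply]
  refine Finset.sum_congr rfl fun k _ => ?_
  rw [Matrix.mul_diagonal, Matrix.conjTranspose_apply, ← Qval_real i e hσ k]
  rfl

lemma W_unitary {d : Type*} [Fintype d] [DecidableEq d] {e : d → d → ℂ} (he : ONB e) :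
    (Matrix.of e)ᵀ * ((Matrix.of e)ᵀ)ᴴ = 1 := by
  have h2 : (Matrix.of e)ᴴ * Matrix.of e = 1 := mul_eq_one_comm.mp he.mul_conjTranspose
  ext a b
  have h3 := congrFun (congrFun h2 b) a
  simp only [Matrix.mul_apply, Matrix.conjTranspose_apply, Matrix.transpose_apply,
    Matrix.of_apply, Matrix.one_apply] at h3 ⊢
  calc ∑ k, e k a * star (e k b)
      = ∑ k, star (e k b) * e k a := Finset.sum_congr rfl fun k _ => mul_comm _ _
    _ = if b = a then 1 else 0 := h3
    _ = if a = b then 1 else 0 := by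
        by_cases h : a = b
        · simp [h]
        · simp [h, show ¬b = a from fun hh => h hh.symm]

lemma Sent_marginal_pinchAt (i : Fin n) {e : m i → m i → ℂ} (he : ONB e)
    {σ : Matrix (∀ j, m j) (∀ j, m j) ℂ} (hσ : σ.IsHermitian) :
    Sent (marginal (pinchAt i e σ) i) = Hmeas i e σ := by
  rw [marginal_pinchAt_self_eq i he hσ, sent_unitary_diag _ _ (W_unitary he), Hmeas]
  exact Finset.sum_congr rfl fun k _ => by rw [trace_embed_proj]

end AuxMulti7
section AuxMulti8
variable {n : ℕ} {m : Fin n → Type*} [∀ i, Fintype (m i)] [∀ i, DecidableEq (m i)]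

lemma DPhi_step (i : Fin n) {e : m i → m i → ℂ} (he : ONB e)
    {σ : Matrix (∀ j, m j) (∀ j, m j) ℂ} (hσ : σ.IsHermitian) :
    DPhiAt i e σ = Sent (pinchAt i e σ) - Sent σ := by
  have hmarg : ∑ j, (Sent (marginal σ j) - Sent (marginal (pinchAt i e σ) j))
      = Sent (marginal σ i) - Sent (marginal (pinchAt i e σ) i) := by
    refine Finset.sum_eq_single i (fun j _ hji => ?_) (by simp)
    rw [marginal_pinchAt_ne i j hji he]
    ring
  have hH : Hmeas i e σ = Sent (marginal (pinchAt i e σ) i) :=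
    (Sent_marginal_pinchAt i he hσ).symm
  rw [DPhiAt, Imut, Imut, hH]
  have hsub : (∑ j, Sent (marginal σ j)) - ∑ j, Sent (marginal (pinchAt i e σ) j)
      = Sent (marginal σ i) - Sent (marginal (pinchAt i e σ) i) := by
    rw [← hmarg, Finset.sum_sub_distrib]
  linarith [hsub]

lemma pinchUpTo_isHermitian (e : ∀ i, m i → m i → ℂ)
    {ρ : Matrix (∀ j, m j) (∀ j, m j) ℂ} (hρ : ρ.IsHermitian) (k : ℕ) :
    (pinchUpTo e k ρ).IsHermitian := by
  induction k with
  | zero => exact hρ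
  | succ k ih =>
    by_cases h : k < n
    · rw [show pinchUpTo e (k + 1) ρ = pinchAt ⟨k, h⟩ (e ⟨k, h⟩) (pinchUpTo e k ρ) from
        dif_pos h]
      exact pinchAt_isHermitian _ _ ih
    · rw [show pinchUpTo e (k + 1) ρ = pinchUpTo e k ρ from dif_neg h]
      exact ih

end AuxMulti8

open scoped ComplexOrder in
/-- Chain decomposition: for a fixed product projective measurement `Φ`, the
fixed-measurement global discord decomposes as
`D_Φ(A₁:⋯:Aₙ) = S(Φ_{A₁⋯Aₙ}(ρ)) − S(ρ) = Σᵢ D_Φ(Φ_{A₁⋯A_{i−1}}(ρ)|A_i)`. -/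
theorem chain_decomposition {n : ℕ} {m : Fin n → Type*}
    [∀ i, Fintype (m i)] [∀ i, DecidableEq (m i)]
    (ρ : Matrix (∀ j, m j) (∀ j, m j) ℂ) (hρ : ρ.PosSemidef) (htr : ρ.trace = 1)
    (e : ∀ i, m i → m i → ℂ) (he : ∀ i, ONB (e i)) :
    Sent (pinchUpTo e n ρ) - Sent ρ =
      ∑ i : Fin n, DPhiAt i (e i) (pinchUpTo e i.val ρ) := by
  
  have hherm : ∀ k : ℕ, (pinchUpTo e k ρ).IsHermitian :=
    fun k => pinchUpTo_isHermitian e hρ.1 k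
  have hstep : ∀ i : Fin n, DPhiAt i (e i) (pinchUpTo e i.val ρ)
      = Sent (pinchUpTo e (i.val + 1) ρ) - Sent (pinchUpTo e i.val ρ) := by
    intro i
    rw [DPhi_step i (he i) (hherm i.val)]
    rw [show pinchUpTo e (i.val + 1) ρ = pinchAt i (e i) (pinchUpTo e i.val ρ) from
      dif_pos i.isLt]
  rw [Finset.sum_congr rfl fun i _ => hstep i]
  rw [Fin.sum_univ_eq_sum_range
    (fun k => Sent (pinchUpTo e (k + 1) ρ) - Sent (pinchUpTo e k ρ)) n]
  rw [Finset.sum_range_sub (fun k => Sent (pinchUpTo e k ρ)) n]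
  rfl
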